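/- Let n ≥ 4 be an even integer and let β > 1. Let f be a normalized analytic function on 𝔻 with f(z) ≠ 0 for all z ∈ 𝔻 \ {0}, and suppose Re( z f'(z)/f(z) ) < β for all z ∈ 𝔻 \ {0}. Then for every z with 0 < |z| < (n−1)/((2β−1)n + 2β − 3), one has z f'(z)/f(z) ∈ Ω_{nL}. (This is the S*_{nL}-radius of the class M(β).) -/

import Mathlib

open Complex Metric Set

/-- The function φ_{nL}(z) = 1 + n z/(n+1) + z^n/(n+1). -/
noncomputable def phinL (n : ℕ) (z : ℂ) : ℂ :=
  1 + (n : ℂ) * z / ((n : ℂ) + 1) + z ^ n / ((n : ℂ) + 1)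

/-- Ω_{nL} = φ_{nL}(𝔻), the image of the open unit disk. -/
def OmeganL (n : ℕ) : Set ℂ := phinL n '' ball (0 : ℂ) 1

/-- f is analytic on the unit disk with f(0) = 0 and f'(0) = 1. -/
def IsNormalizedAnalytic (f : ℂ → ℂ) : Prop :=
  AnalyticOnNhd ℂ f (ball (0 : ℂ) 1) ∧ f 0 = 0 ∧ deriv f 0 = 1

/-- p is subordinate to ψ on the unit disk. -/
def Subord (p ψ : ℂ → ℂ) : Prop :=
  ∃ ω : ℂ → ℂ, AnalyticOnNhd ℂ ω (ball (0 : ℂ) 1) ∧ ω 0 = 0 ∧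
    (∀ z ∈ ball (0 : ℂ) 1, ω z ∈ ball (0 : ℂ) 1) ∧
    (∀ z ∈ ball (0 : ℂ) 1, p z = ψ (ω z))

/-- Membership in the class S*_{nL}. -/
def MemSnL (n : ℕ) (f : ℂ → ℂ) : Prop :=
  IsNormalizedAnalytic f ∧ (∀ z ∈ ball (0 : ℂ) 1, z ≠ 0 → f z ≠ 0) ∧
  Subord (fun z => if z = 0 then 1 else z * deriv f z / f z) (phinL n)


lemma phinL_strictDeriv (n : ℕ) (z : ℂ) :
    HasStrictDerivAt (phinL n) ((n : ℂ) * (1 + z ^ (n - 1)) / ((n : ℂ) + 1)) z := by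
  have h1 : HasStrictDerivAt (fun z : ℂ => (n : ℂ) * z / ((n : ℂ) + 1))
      ((n : ℂ) / ((n : ℂ) + 1)) z := by
    simpa using ((hasStrictDerivAt_id z).const_mul (n : ℂ)).div_const ((n : ℂ) + 1)
  have h2 : HasStrictDerivAt (fun z : ℂ => z ^ n / ((n : ℂ) + 1))
      ((n : ℂ) * z ^ (n - 1) / ((n : ℂ) + 1)) z :=
    (hasStrictDerivAt_pow n z).div_const _
  have := ((hasStrictDerivAt_const z (1 : ℂ)).add h1).add h2
  exact this.congr_deriv (by ring)

lemma aux_boundary (n : ℕ) (hn : 4 ≤ n) (z : ℂ) (hz : ‖z‖ = 1) :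
    ((n : ℝ) - 1) / ((n : ℝ) + 1) ≤ ‖phinL n z - 1‖ := by
  have hnc : ((n : ℂ) + 1) ≠ 0 := by
    have : ((n : ℂ) + 1) = ((n + 1 : ℕ) : ℂ) := by push_cast; ring
    rw [this]
    exact_mod_cast Nat.succ_ne_zero n
  have heq : phinL n z - 1 = ((n : ℂ) * z + z ^ n) / ((n : ℂ) + 1) := by
    unfold phinL; field_simp; ring
  rw [heq, norm_div]
  have habs1 : ‖(n : ℂ) + 1‖ = (n : ℝ) + 1 := by
    have : ((n : ℂ) + 1) = ((n + 1 : ℕ) : ℂ) := by push_cast; ring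
    rw [this, Complex.norm_natCast]; push_cast; ring
  rw [habs1]
  have hnum : (n : ℝ) - 1 ≤ ‖(n : ℂ) * z + z ^ n‖ := by
    have h := norm_sub_norm_le ((n : ℂ) * z) (-(z ^ n))
    simp only [sub_neg_eq_add, norm_neg] at h
    have h1 : ‖(n : ℂ) * z‖ = (n : ℝ) := by
      rw [norm_mul, Complex.norm_natCast, hz, mul_one]
    have h2 : ‖z ^ n‖ = 1 := by rw [norm_pow, hz, one_pow]
    rw [h1, h2] at h
    exact h
  have hpos : (0 : ℝ) ≤ (n : ℝ) + 1 := by positivity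
  exact div_le_div_of_nonneg_right hnum (by positivity)

lemma aux_open (n : ℕ) (hn : 4 ≤ n) : IsOpen (OmeganL n) := by
  rw [isOpen_iff_mem_nhds]
  rintro w ⟨z, hz, rfl⟩
  have hzb : ‖z‖ < 1 := by simpa [mem_ball, Complex.dist_eq] using hz
  have hne : (n : ℂ) * (1 + z ^ (n - 1)) / ((n : ℂ) + 1) ≠ 0 := by
    apply div_ne_zero
    · apply mul_ne_zero
      · exact Nat.cast_ne_zero.mpr (by omega)
      · intro h
        have h2 : z ^ (n - 1) = -1 := by linear_combination h
        have : ‖z ^ (n - 1)‖ = 1 := by rw [h2]; simp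
        rw [norm_pow] at this
        have hlt : ‖z‖ ^ (n - 1) < 1 := by
          apply pow_lt_one₀ (norm_nonneg z) hzb
          omega
        rw [this] at hlt
        exact lt_irrefl _ hlt
    · have : ((n : ℂ) + 1) = ((n + 1 : ℕ) : ℂ) := by push_cast; ring
      rw [this]
      exact_mod_cast Nat.succ_ne_zero n
  have hmap := (phinL_strictDeriv n z).map_nhds_eq hne
  have : OmeganL n ∈ Filter.map (phinL n) (nhds z) :=
    Filter.image_mem_map (isOpen_ball.mem_nhds hz)
  rwa [hmap] at this

lemma aux_disk (n : ℕ) (hn : 4 ≤ n) (w : ℂ)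
    (hw : ‖w - 1‖ < ((n : ℝ) - 1) / ((n : ℝ) + 1)) : w ∈ OmeganL n := by
  have hn4 : (4 : ℝ) ≤ (n : ℝ) := by exact_mod_cast hn
  set m : ℝ := ((n : ℝ) - 1) / ((n : ℝ) + 1) with hmdef
  have hm : 0 < m := by apply div_pos <;> linarith
  have hcont : Continuous (phinL n) := by
    unfold phinL
    exact ((continuous_const.add ((continuous_const.mul continuous_id).div_const _)).add
      ((continuous_pow n).div_const _))
  have hK : IsClosed (phinL n '' closedBall 0 1) :=
    ((isCompact_closedBall 0 1).image hcont).isClosed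
  -- any point of ball 1 m that's in the image of the closed ball is in OmeganL
  have hkey : ∀ x ∈ ball (1 : ℂ) m, x ∈ phinL n '' closedBall 0 1 → x ∈ OmeganL n := by
    rintro x hx ⟨z, hz, rfl⟩
    have hz1 : ‖z‖ ≤ 1 := by simpa [Complex.dist_eq] using hz
    rcases lt_or_eq_of_le hz1 with h | h
    · exact ⟨z, by simpa [mem_ball, Complex.dist_eq] using h, rfl⟩
    · exfalso
      have hb := aux_boundary n hn z h
      have hxm : ‖phinL n z - 1‖ < m := by
        simpa [Complex.dist_eq] using hx
      exact absurd (lt_of_le_of_lt hb hxm) (lt_irrefl _)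
  by_contra hcontra
  have hwK : w ∉ phinL n '' closedBall 0 1 := by
    intro h
    exact hcontra (hkey w (by simpa [mem_ball, Complex.dist_eq] using hw) h)
  have hpre : IsPreconnected (ball (1 : ℂ) m) := (convex_ball (1 : ℂ) m).isPreconnected
  have h1mem : (1 : ℂ) ∈ OmeganL n := ⟨0, by simp [mem_ball], by simp [phinL, zero_pow (by omega : n ≠ 0)]⟩
  obtain ⟨y, hyS, hyU, hyV⟩ := hpre (OmeganL n) ((phinL n '' closedBall 0 1)ᶜ)
    (aux_open n hn) hK.isOpen_compl
    (fun x hx => by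
      by_cases hc : x ∈ phinL n '' closedBall 0 1
      · exact Or.inl (hkey x hx hc)
      · exact Or.inr hc)
    ⟨1, mem_ball_self hm, h1mem⟩
    ⟨w, by simpa [mem_ball, Complex.dist_eq] using hw, hwK⟩
  exact hyV (image_mono ball_subset_closedBall hyU)


lemma aux_growth (β : ℝ) (hβ : 1 < β) (f : ℂ → ℂ) (hf : IsNormalizedAnalytic f)
    (hfz : ∀ z ∈ ball (0 : ℂ) 1, z ≠ 0 → f z ≠ 0)
    (hre : ∀ z ∈ ball (0 : ℂ) 1, z ≠ 0 → (z * deriv f z / f z).re < β) :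
    ∀ z ∈ ball (0 : ℂ) 1, z ≠ 0 →
      ‖z * deriv f z / f z - 1‖
        ≤ 2 * (β - 1) * ‖z‖ / (1 - ‖z‖) := by
  obtain ⟨hfa, hf0, hfd⟩ := hf
  set g : ℂ → ℂ := dslope f 0 with hgdef
  have hgdiff : DifferentiableOn ℂ g (ball (0 : ℂ) 1) :=
    (differentiableOn_dslope (ball_mem_nhds 0 one_pos)).mpr hfa.differentiableOn
  have hga : AnalyticOnNhd ℂ g (ball (0 : ℂ) 1) := hgdiff.analyticOnNhd isOpen_ball
  have hgz : ∀ w : ℂ, w * g w = f w := by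
    intro w
    have := sub_smul_dslope f 0 w
    simpa [hf0, smul_eq_mul] using this
  have hg0 : g 0 = 1 := by rw [hgdef, dslope_same, hfd]
  have hgne : ∀ w ∈ ball (0 : ℂ) 1, g w ≠ 0 := by
    intro w hw
    by_cases hw0 : w = 0
    · rw [hw0, hg0]; exact one_ne_zero
    · intro h
      apply hfz w hw hw0
      rw [← hgz w, h, mul_zero]
  have hderiv : ∀ w ∈ ball (0 : ℂ) 1, deriv f w = g w + w * deriv g w := by
    intro w hw
    have hfeq : f = fun x => x * g x := funext fun x => (hgz x).symm
    rw [hfeq]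
    have hgd : HasDerivAt g (deriv g w) w :=
      ((hga w hw).differentiableAt).hasDerivAt
    have := (hasDerivAt_id' w).mul hgd
    exact this.deriv.trans (by ring)
  -- p w = z f'/f extended
  set p : ℂ → ℂ := fun w => 1 + w * deriv g w / g w with hpdef
  have hpeq : ∀ w ∈ ball (0 : ℂ) 1, w ≠ 0 → w * deriv f w / f w = p w := by
    intro w hw hw0
    rw [hderiv w hw, ← hgz w, hpdef]
    field_simp [hgne w hw]
  have hpre : ∀ w ∈ ball (0 : ℂ) 1, (p w).re < β := by
    intro w hw
    by_cases hw0 : w = 0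
    · simp [hpdef, hw0]; linarith
    · rw [← hpeq w hw hw0]; exact hre w hw hw0
  have hp0 : p 0 = 1 := by simp [hpdef]
  -- p differentiable on ball
  have hpdiff : DifferentiableOn ℂ p (ball (0 : ℂ) 1) := by
    apply DifferentiableOn.add (differentiableOn_const 1)
    exact (differentiableOn_id.mul hga.deriv.differentiableOn).div
      hga.differentiableOn hgne
  set a : ℝ := β - 1 with hadef
  have ha : 0 < a := by linarith
  set q : ℂ → ℂ := fun w => (β : ℂ) - p w with hqdef
  have hqre : ∀ w ∈ ball (0 : ℂ) 1, 0 < (q w).re := by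
    intro w hw
    have := hpre w hw
    simp [hqdef, Complex.sub_re, Complex.ofReal_re]
    linarith
  have hden : ∀ w ∈ ball (0 : ℂ) 1, q w + (a : ℂ) ≠ 0 := by
    intro w hw h
    have : (q w + (a : ℂ)).re = 0 := by rw [h]; simp
    rw [Complex.add_re, Complex.ofReal_re] at this
    have := hqre w hw
    linarith
  set ω : ℂ → ℂ := fun w => (q w - (a : ℂ)) / (q w + (a : ℂ)) with hωdef
  have hωdiff : DifferentiableOn ℂ ω (ball (0 : ℂ) 1) := by
    apply DifferentiableOn.div
    · exact ((differentiableOn_const _).sub hpdiff).sub (differentiableOn_const _)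
    · exact ((differentiableOn_const _).sub hpdiff).add (differentiableOn_const _)
    · exact hden
  have hω0 : ω 0 = 0 := by
    have : q 0 - (a : ℂ) = 0 := by
      rw [hqdef]; simp [hp0, hadef]
    simp [hωdef, this]
  have hωmaps : MapsTo ω (ball (0 : ℂ) 1) (ball (0 : ℂ) 1) := by
    intro w hw
    rw [mem_ball_zero_iff]
    rw [hωdef]
    rw [norm_div, div_lt_one (norm_pos_iff.mpr (hden w hw))]
    have hsq : Complex.normSq (q w - (a : ℂ)) < Complex.normSq (q w + (a : ℂ)) := by
      rw [Complex.normSq_apply, Complex.normSq_apply]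
      simp only [Complex.sub_re, Complex.sub_im, Complex.add_re, Complex.add_im,
        Complex.ofReal_re, Complex.ofReal_im]
      have h1 := hqre w hw
      nlinarith [ha, h1]
    rw [Complex.norm_def, Complex.norm_def]
    exact Real.sqrt_lt_sqrt (Complex.normSq_nonneg _) hsq
  -- Schwarz
  intro z hz hz0
  have hzb : ‖z‖ < 1 := by simpa [mem_ball, Complex.dist_eq] using hz
  have hschwarz : ‖ω z‖ ≤ ‖z‖ :=
    Complex.norm_le_norm_of_mapsTo_ball_self hωdiff (hωmaps.mono_right ball_subset_closedBall) hω0 hzb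
  have hωlt : ‖ω z‖ < 1 := lt_of_le_of_lt hschwarz hzb
  have h1ω : (1 : ℂ) - ω z ≠ 0 := by
    intro h
    have : ω z = 1 := by linear_combination -h
    rw [this] at hωlt; simp at hωlt
  -- identity: p z - 1 = -(2 a ω z)/(1 - ω z)
  have hkey : p z - 1 = -(2 * (a : ℂ) * ω z) / (1 - ω z) := by
    have hd := hden z hz
    have hane : (a : ℂ) ≠ 0 := by
      simp only [ne_eq, Complex.ofReal_eq_zero]; linarith
    have habstract : ∀ x c : ℂ, x + c ≠ 0 → 1 - (x - c) / (x + c) ≠ 0 →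
        c - x = -(2 * c * ((x - c) / (x + c))) / (1 - (x - c) / (x + c)) := by
      intro x c h1 h2
      rw [eq_div_iff h2]
      field_simp
      ring
    have hstep : p z - 1 = (a : ℂ) - q z := by
      have : q z = (β : ℂ) - p z := by rw [hqdef]
      rw [this, hadef]; push_cast; ring
    rw [hstep]
    exact habstract (q z) (a : ℂ) hd h1ω
  rw [hpeq z hz hz0, hkey]
  rw [norm_div, norm_neg, norm_mul, norm_mul]
  have habs2 : ‖(2 : ℂ)‖ = 2 := by simp
  have habsa : ‖(a : ℂ)‖ = a := by
    rw [Complex.norm_real, Real.norm_eq_abs, abs_of_pos ha]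
  rw [habs2, habsa]
  have hlow : 1 - ‖z‖ ≤ ‖1 - ω z‖ := by
    have h := norm_sub_norm_le (1 : ℂ) (ω z)
    simp only [norm_one] at h
    linarith
  have hpos : 0 < 1 - ‖z‖ := by linarith
  apply div_le_div₀ (by positivity)
  · have := mul_le_mul_of_nonneg_left hschwarz (by positivity : (0:ℝ) ≤ 2 * a)
    linarith
  · exact hpos
  · exact hlow

theorem stmt11 (n : ℕ) (hn : 4 ≤ n) (hne : Even n) (β : ℝ) (hβ : 1 < β)
    (f : ℂ → ℂ) (hf : IsNormalizedAnalytic f)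
    (hfz : ∀ z ∈ ball (0 : ℂ) 1, z ≠ 0 → f z ≠ 0)
    (hre : ∀ z ∈ ball (0 : ℂ) 1, z ≠ 0 → (z * deriv f z / f z).re < β) :
    ∀ z : ℂ, 0 < ‖z‖ →
      ‖z‖ < ((n : ℝ) - 1) / ((2 * β - 1) * (n : ℝ) + 2 * β - 3) →
      z * deriv f z / f z ∈ OmeganL n := by
  intro z hz0 hzr
  have hn4 : (4 : ℝ) ≤ (n : ℝ) := by exact_mod_cast hn
  set r : ℝ := ‖z‖ with hrdef
  set D : ℝ := (2 * β - 1) * (n : ℝ) + 2 * β - 3 with hDdef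
  have hD : 0 < D := by nlinarith
  have hrD : r * D < (n : ℝ) - 1 := by
    rw [← lt_div_iff₀ hD]; exact hzr
  have hr1 : r < 1 := by nlinarith
  have hzball : z ∈ ball (0 : ℂ) 1 := by
    simpa [mem_ball, Complex.dist_eq] using hr1
  have hzne : z ≠ 0 := norm_pos_iff.mp hz0
  have hg := aux_growth β hβ f hf hfz hre z hzball hzne
  have hbound : 2 * (β - 1) * r / (1 - r) < ((n : ℝ) - 1) / ((n : ℝ) + 1) := by
    rw [div_lt_div_iff₀ (by linarith) (by linarith)]
    nlinarith [norm_nonneg z]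
  exact aux_disk n hn _ (lt_of_le_of_lt hg hbound)
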